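/- arXiv:2003.01701 — 2 statements merged into one kernel-verified Lean document; each statement's English description precedes it below -/
import Mathlib

section
/- Let R(s) = Σ_{i=1}^n R_i(s) e^{-h_i s} be a delay system with each R_i rational, stable, proper, and with real coefficients, and define the conjugate R̄(s) := e^{-h_n s} R(−s) M_C(s), where M_C is a finite Blaschke product (with real coefficients) whose zeros are exactly the right half-plane poles of s ↦ R(−s), with matching multiplicities. Then R̄ is bounded and analytic on the open right half-plane, and |R̄(jω)| = |R(jω)| for all ω ∈ ℝ. -/
open Complex Polynomial Filter Finset

/-- The `i`-th rational term `R_i(s) = p_i(s)/q_i(s)` viewed as a function on `ℂ`. -/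
noncomputable def ratTerm {n : ℕ} (p q : Fin n → Polynomial ℝ) (i : Fin n) (s : ℂ) : ℂ :=
  ((p i).map (algebraMap ℝ ℂ)).eval s / ((q i).map (algebraMap ℝ ℂ)).eval s

/-- The delay system `R(s) = ∑ᵢ R_i(s) e^{-h_i s}`. -/
noncomputable def delaySys {n : ℕ} (p q : Fin n → Polynomial ℝ) (h : Fin n → ℝ) (s : ℂ) : ℂ :=
  ∑ i : Fin n, ratTerm p q i s * Complex.exp (-(h i : ℂ) * s)

/-- The conjugate system `R̄(s) = e^{-h_n s} R(-s) M_C(s)`, where `M_C` is the finite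
Blaschke product with zeros `w₁,…,w_m` (the right half-plane reflections of the stable
poles of the `R_i`). -/
noncomputable def conjSys {n m : ℕ} (p q : Fin n → Polynomial ℝ) (h : Fin n → ℝ)
    (hlast : ℝ) (w : Fin m → ℂ) (s : ℂ) : ℂ :=
  Complex.exp (-(hlast : ℂ) * s) * delaySys p q h (-s) *
    ∏ k : Fin m, (s - w k) / (s + starRingEnd ℂ (w k))


lemma evalConj (P : Polynomial ℝ) (z : ℂ) :
    (P.map (algebraMap ℝ ℂ)).eval ((starRingEnd ℂ) z) =
      (starRingEnd ℂ) ((P.map (algebraMap ℝ ℂ)).eval z) := by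
  rw [eval_map, eval_map, Polynomial.hom_eval₂]
  congr 1
  ext r
  simp [Complex.conj_ofReal]

lemma polyUpper (P : Polynomial ℂ) (d : ℕ) (hd : P.natDegree ≤ d) :
    ∃ B : ℝ, 0 ≤ B ∧ ∀ z : ℂ, 1 ≤ ‖z‖ →
      ‖P.eval z‖ ≤ B * ‖z‖ ^ d := by
  refine ⟨∑ i ∈ Finset.range (P.natDegree + 1), ‖P.coeff i‖,
    Finset.sum_nonneg fun i _ => (norm_nonneg _), fun z hz => ?_⟩
  rw [Polynomial.eval_eq_sum_range, Finset.sum_mul]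
  refine (norm_sum_le _ _).trans (Finset.sum_le_sum fun i hi => ?_)
  rw [norm_mul, norm_pow]
  have hi' : i ≤ d := by
    have := Finset.mem_range.mp hi; omega
  exact mul_le_mul_of_nonneg_left (pow_le_pow_right₀ hz hi') (norm_nonneg _)

lemma polyLower (Q : Polynomial ℂ) (hQ0 : Q ≠ 0) :
    ∃ R c : ℝ, 0 < c ∧ 1 ≤ R ∧ ∀ z : ℂ, R ≤ ‖z‖ →
      c * ‖z‖ ^ Q.natDegree ≤ ‖Q.eval z‖ := by
  rcases Nat.eq_zero_or_pos Q.natDegree with h0 | hpos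
  · have hc : Q.coeff 0 ≠ 0 := by
      intro hc
      apply hQ0
      rw [Polynomial.eq_C_of_natDegree_eq_zero h0, hc, map_zero]
    refine ⟨1, ‖Q.coeff 0‖, norm_pos_iff.mpr hc, le_refl 1, fun z hz => ?_⟩
    rw [h0, pow_zero, mul_one]
    conv_rhs => rw [Polynomial.eq_C_of_natDegree_eq_zero h0]
    simp
  · -- Q = eraseLead + C lead * X^d
    set d := Q.natDegree with hd
    set L := ‖Q.leadingCoeff‖ with hL
    have hLpos : 0 < L := norm_pos_iff.mpr (Polynomial.leadingCoeff_ne_zero.mpr hQ0)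
    obtain ⟨B, hB0, hB⟩ := polyUpper Q.eraseLead (d - 1)
      (by
        have := Polynomial.eraseLead_natDegree_le Q
        omega)
    refine ⟨max 1 (2 * B / L + 1), L / 2, by positivity, le_max_left _ _, fun z hz => ?_⟩
    have hz1 : 1 ≤ ‖z‖ := le_trans (le_max_left _ _) hz
    have hz2 : 2 * B / L + 1 ≤ ‖z‖ := le_trans (le_max_right _ _) hz
    have heval : Q.eval z = Q.eraseLead.eval z + Q.leadingCoeff * z ^ d := by
      conv_lhs => rw [← Polynomial.eraseLead_add_C_mul_X_pow Q]
      rw [Polynomial.eval_add, Polynomial.eval_mul, Polynomial.eval_pow,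
        Polynomial.eval_C, Polynomial.eval_X, ← hd]
    have h1 : ‖Q.leadingCoeff * z ^ d‖ = L * ‖z‖ ^ d := by
      rw [norm_mul, norm_pow]
    have h2 : ‖Q.eraseLead.eval z‖ ≤ (L / 2) * ‖z‖ ^ d := by
      have hBle : B ≤ (L / 2) * ‖z‖ := by
        have h4 : 2 * B / L ≤ ‖z‖ := by linarith
        calc B = (L/2) * (2*B/L) := by field_simp
        _ ≤ (L/2) * ‖z‖ := mul_le_mul_of_nonneg_left h4 (by positivity)
      calc ‖Q.eraseLead.eval z‖ ≤ B * ‖z‖ ^ (d-1) := hB z hz1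
      _ ≤ ((L/2) * ‖z‖) * ‖z‖ ^ (d-1) :=
          mul_le_mul_of_nonneg_right hBle (by positivity)
      _ = (L/2) * (‖z‖ ^ (d-1+1)) := by ring
      _ = (L/2) * ‖z‖ ^ d := by congr 2; omega
    calc (L/2) * ‖z‖ ^ d
        = L * ‖z‖ ^ d - (L/2) * ‖z‖ ^ d := by ring
      _ ≤ ‖Q.leadingCoeff * z ^ d‖ - ‖Q.eraseLead.eval z‖ := by
          rw [h1]; linarith
      _ ≤ ‖Q.eraseLead.eval z + Q.leadingCoeff * z ^ d‖ := by
          have key : ‖Q.leadingCoeff * z ^ d‖ ≤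
              ‖Q.eraseLead.eval z + Q.leadingCoeff * z ^ d‖
                + ‖Q.eraseLead.eval z‖ := by
            have heq : Q.leadingCoeff * z ^ d =
                (Q.eraseLead.eval z + Q.leadingCoeff * z ^ d) + (-(Q.eraseLead.eval z)) := by
              ring
            calc ‖Q.leadingCoeff * z ^ d‖
                = ‖(Q.eraseLead.eval z + Q.leadingCoeff * z ^ d)
                    + (-(Q.eraseLead.eval z))‖ := by rw [← heq]
              _ ≤ ‖Q.eraseLead.eval z + Q.leadingCoeff * z ^ d‖
                    + ‖-(Q.eraseLead.eval z)‖ := norm_add_le _ _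
              _ = ‖Q.eraseLead.eval z + Q.leadingCoeff * z ^ d‖
                    + ‖Q.eraseLead.eval z‖ := by rw [norm_neg]
          linarith
      _ = ‖Q.eval z‖ := by rw [heval]

lemma ratBound (P Q : Polynomial ℂ) (hd : P.natDegree ≤ Q.natDegree)
    (hQ : ∀ z : ℂ, 0 ≤ z.re → Q.eval z ≠ 0) :
    ∃ C : ℝ, 0 ≤ C ∧ ∀ z : ℂ, 0 ≤ z.re →
      ‖P.eval z‖ ≤ C * ‖Q.eval z‖ := by
  have hQ0 : Q ≠ 0 := by
    intro h
    exact hQ 0 (by simp) (by simp [h])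
  obtain ⟨B, hB0, hB⟩ := polyUpper P Q.natDegree hd
  obtain ⟨R, c, hc, hR1, hlow⟩ := polyLower Q hQ0
  set K : Set ℂ := Metric.closedBall 0 R ∩ {z : ℂ | 0 ≤ z.re} with hK
  have hKc : IsCompact K := (isCompact_closedBall _ _).inter_right
    (isClosed_le continuous_const Complex.continuous_re)
  have h0K : (0:ℂ) ∈ K := ⟨by simp [Metric.mem_closedBall]; linarith, by simp⟩
  have hcontQ : ContinuousOn (fun z => ‖Q.eval z‖) K :=
    (continuous_norm.comp (Q.continuous_aeval)).continuousOn
  have hcontP : ContinuousOn (fun z => ‖P.eval z‖) K :=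
    (continuous_norm.comp (P.continuous_aeval)).continuousOn
  obtain ⟨z0, hz0K, hz0min⟩ := hKc.exists_isMinOn ⟨0, h0K⟩ hcontQ
  obtain ⟨z1, hz1K, hz1max⟩ := hKc.exists_isMaxOn ⟨0, h0K⟩ hcontP
  set δ : ℝ := ‖Q.eval z0‖ with hδ
  set M1 : ℝ := ‖P.eval z1‖ with hM1
  have hδpos : 0 < δ := norm_pos_iff.mpr (hQ z0 hz0K.2)
  have hM10 : 0 ≤ M1 := norm_nonneg _
  refine ⟨max (B/c) (M1/δ), le_trans (by positivity) (le_max_left _ _), fun z hz => ?_⟩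
  have hQpos : 0 < ‖Q.eval z‖ := norm_pos_iff.mpr (hQ z hz)
  rcases le_or_gt (‖z‖) R with hle | hgt
  · have hzK : z ∈ K := ⟨by simpa [Metric.mem_closedBall] using hle, hz⟩
    have h1 : ‖P.eval z‖ ≤ M1 := hz1max hzK
    have h2 : δ ≤ ‖Q.eval z‖ := hz0min hzK
    calc ‖P.eval z‖ ≤ M1 := h1
      _ = (M1/δ) * δ := by field_simp
      _ ≤ (M1/δ) * ‖Q.eval z‖ :=
        mul_le_mul_of_nonneg_left h2 (by positivity)
      _ ≤ max (B/c) (M1/δ) * ‖Q.eval z‖ :=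
        mul_le_mul_of_nonneg_right (le_max_right _ _) (le_of_lt hQpos)
  · have hz1' : 1 ≤ ‖z‖ := le_trans hR1 (le_of_lt hgt)
    calc ‖P.eval z‖ ≤ B * ‖z‖ ^ Q.natDegree := hB z hz1'
      _ = (B/c) * (c * ‖z‖ ^ Q.natDegree) := by field_simp
      _ ≤ (B/c) * ‖Q.eval z‖ :=
        mul_le_mul_of_nonneg_left (hlow z (le_of_lt hgt)) (by positivity)
      _ ≤ max (B/c) (M1/δ) * ‖Q.eval z‖ :=
        mul_le_mul_of_nonneg_right (le_max_left _ _) (le_of_lt hQpos)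

/-- the conjugate `R̄(s) = e^{-hₙ s} R(-s) M_C(s)` of a delay system with
stable proper real-rational coefficients extends to a bounded analytic function on the
open right half-plane, and `|R̄(jω)| = |R(jω)|` for all real `ω`. -/
theorem stmt10 (n : ℕ) (hn : 0 < n) (p q : Fin n → Polynomial ℝ) (h : Fin n → ℝ)
    (hpos : ∀ i, 0 ≤ h i) (hmono : StrictMono h)
    (hstable : ∀ i, ∀ z : ℂ, 0 ≤ z.re → ((q i).map (algebraMap ℝ ℂ)).eval z ≠ 0)
    (hproper : ∀ i, (p i).natDegree ≤ (q i).natDegree)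
    (m : ℕ) (w : Fin m → ℂ) (hw : ∀ k, 0 < (w k).re) (a : ℂ) (ha : a ≠ 0)
    -- the zeros of the Blaschke product `M_C`, with multiplicities, are exactly the
    -- right half-plane roots of `s ↦ ∏ᵢ qᵢ(-s)`, i.e. the reflected stable poles:
    (hfact : ∀ s : ℂ, (∏ i : Fin n, ((q i).map (algebraMap ℝ ℂ)).eval (-s)) =
      a * ∏ k : Fin m, (s - w k)) :
    (∃ G : ℂ → ℂ, DifferentiableOn ℂ G {s : ℂ | 0 < s.re} ∧
      (∃ C : ℝ, ∀ s : ℂ, 0 < s.re → ‖G s‖ ≤ C) ∧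
      ∀ s : ℂ, 0 < s.re → (∏ i : Fin n, ((q i).map (algebraMap ℝ ℂ)).eval (-s)) ≠ 0 →
        G s = conjSys p q h (h ⟨n - 1, Nat.sub_lt hn one_pos⟩) w s) ∧
    ∀ ω : ℝ, ‖conjSys p q h (h ⟨n - 1, Nat.sub_lt hn one_pos⟩) w
        (Complex.I * ω)‖ = ‖delaySys p q h (Complex.I * ω)‖ := by
  set hl : ℝ := h ⟨n - 1, Nat.sub_lt hn one_pos⟩ with hhl
  have hhle : ∀ i : Fin n, h i ≤ hl := by
    intro i
    apply hmono.monotone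
    exact Fin.le_def.mpr (by show (i:ℕ) ≤ n - 1; omega)
  constructor
  · -- analytic/bounded part
    set QD : Polynomial ℂ :=
      Polynomial.C a * ∏ k : Fin m, (Polynomial.X + Polynomial.C (starRingEnd ℂ (w k)))
      with hQD
    set PP : Fin n → Polynomial ℂ := fun i =>
      (((p i).map (algebraMap ℝ ℂ)).comp (-Polynomial.X)) *
        ∏ j ∈ Finset.univ.erase i, (((q j).map (algebraMap ℝ ℂ)).comp (-Polynomial.X))
      with hPP
    have hQDeval : ∀ s : ℂ, QD.eval s = a * ∏ k : Fin m, (s + starRingEnd ℂ (w k)) := by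
      intro s; simp [hQD, eval_prod]
    have hPPeval : ∀ (i : Fin n) (s : ℂ), (PP i).eval s =
        ((p i).map (algebraMap ℝ ℂ)).eval (-s) *
          ∏ j ∈ Finset.univ.erase i, ((q j).map (algebraMap ℝ ℂ)).eval (-s) := by
      intro i s; simp [hPP, eval_prod, eval_comp]
    have hQDne : ∀ z : ℂ, 0 ≤ z.re → QD.eval z ≠ 0 := by
      intro z hz
      rw [hQDeval]
      refine mul_ne_zero ha (Finset.prod_ne_zero_iff.mpr fun k _ => ?_)
      intro h0
      have : (z + starRingEnd ℂ (w k)).re = 0 := by rw [h0]; simp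
      rw [Complex.add_re, Complex.conj_re] at this
      linarith [hw k]
    have hdcomp : ∀ P : Polynomial ℂ, (P.comp (-Polynomial.X)).natDegree = P.natDegree := by
      intro P
      rw [Polynomial.natDegree_comp]
      simp [Polynomial.natDegree_neg]
    have hcompne : ∀ i, (((q i).map (algebraMap ℝ ℂ)).comp (-Polynomial.X)) ≠ 0 := by
      intro i h0
      apply hstable i 0 (by simp)
      have := congrArg (Polynomial.eval (0:ℂ)) h0
      simpa [eval_comp] using this
    have hA : (∏ i : Fin n, (((q i).map (algebraMap ℝ ℂ)).comp (-Polynomial.X))) =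
        Polynomial.C a * ∏ k : Fin m, (Polynomial.X - Polynomial.C (w k)) := by
      apply Polynomial.funext
      intro s
      simpa [eval_prod, eval_comp] using hfact s
    have hsum : ∑ i : Fin n, ((q i).map (algebraMap ℝ ℂ)).natDegree = m := by
      have h1 : (∏ i : Fin n, (((q i).map (algebraMap ℝ ℂ)).comp (-Polynomial.X))).natDegree
          = ∑ i : Fin n, ((q i).map (algebraMap ℝ ℂ)).natDegree := by
        rw [Polynomial.natDegree_prod _ _ fun i _ => hcompne i]
        exact Finset.sum_congr rfl fun i _ => hdcomp _
      rw [hA] at h1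
      rw [← h1, Polynomial.natDegree_C_mul ha,
        Polynomial.natDegree_prod_of_monic _ _ fun k _ => Polynomial.monic_X_sub_C _]
      simp
    have hdegQD : QD.natDegree = m := by
      rw [hQD, Polynomial.natDegree_C_mul ha,
        Polynomial.natDegree_prod_of_monic _ _ fun k _ => Polynomial.monic_X_add_C _]
      simp
    have hdegPP : ∀ i, (PP i).natDegree ≤ QD.natDegree := by
      intro i
      rw [hdegQD]
      refine (Polynomial.natDegree_mul_le).trans ?_
      have h1 : ((((p i).map (algebraMap ℝ ℂ))).comp (-Polynomial.X)).natDegree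
          ≤ ((q i).map (algebraMap ℝ ℂ)).natDegree := by
        rw [hdcomp]
        rw [Polynomial.natDegree_map_eq_of_injective (algebraMap ℝ ℂ).injective,
          Polynomial.natDegree_map_eq_of_injective (algebraMap ℝ ℂ).injective]
        exact hproper i
      have h2 : (∏ j ∈ Finset.univ.erase i,
          (((q j).map (algebraMap ℝ ℂ)).comp (-Polynomial.X))).natDegree
          ≤ ∑ j ∈ Finset.univ.erase i, ((q j).map (algebraMap ℝ ℂ)).natDegree := by
        refine (Polynomial.natDegree_prod_le _ _).trans ?_
        exact le_of_eq (Finset.sum_congr rfl fun j _ => hdcomp _)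
      calc ((((p i).map (algebraMap ℝ ℂ))).comp (-Polynomial.X)).natDegree +
            (∏ j ∈ Finset.univ.erase i,
              (((q j).map (algebraMap ℝ ℂ)).comp (-Polynomial.X))).natDegree
          ≤ ((q i).map (algebraMap ℝ ℂ)).natDegree +
            ∑ j ∈ Finset.univ.erase i, ((q j).map (algebraMap ℝ ℂ)).natDegree :=
            add_le_add h1 h2
        _ = ∑ j : Fin n, ((q j).map (algebraMap ℝ ℂ)).natDegree :=
            Finset.add_sum_erase Finset.univ
              (fun j => ((q j).map (algebraMap ℝ ℂ)).natDegree) (Finset.mem_univ i)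
        _ = m := hsum
    choose Cb hCb0 hCb using fun i => ratBound (PP i) QD (hdegPP i) hQDne
    refine ⟨fun s => (∑ i : Fin n, (PP i).eval s *
        Complex.exp (((h i - hl : ℝ) : ℂ) * s)) / QD.eval s, ?_, ?_, ?_⟩
    · -- differentiable
      apply DifferentiableOn.div
      · refine (Differentiable.fun_sum fun i _ => ?_).differentiableOn
        exact (PP i).differentiable.mul
          (Complex.differentiable_exp.comp ((differentiable_id.const_mul _)))
      · exact (QD.differentiable).differentiableOn
      · exact fun s hs => hQDne s (le_of_lt hs)
    · -- bounded
      refine ⟨∑ i, Cb i, fun s hs => ?_⟩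
      have hQpos : 0 < ‖QD.eval s‖ := norm_pos_iff.mpr (hQDne s (le_of_lt hs))
      rw [norm_div, div_le_iff₀ hQpos]
      refine (norm_sum_le _ _).trans ?_
      rw [Finset.sum_mul]
      refine Finset.sum_le_sum fun i _ => ?_
      rw [norm_mul]
      have hexp : ‖Complex.exp (((h i - hl : ℝ) : ℂ) * s)‖ ≤ 1 := by
        rw [Complex.norm_exp, Real.exp_le_one_iff]
        have : (((h i - hl : ℝ) : ℂ) * s).re = (h i - hl) * s.re := by
          simp [Complex.mul_re]
        rw [this]
        exact mul_nonpos_of_nonpos_of_nonneg (by linarith [hhle i]) (le_of_lt hs)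
      calc ‖(PP i).eval s‖ * ‖Complex.exp _‖
          ≤ ‖(PP i).eval s‖ * 1 :=
            mul_le_mul_of_nonneg_left hexp (norm_nonneg _)
        _ = ‖(PP i).eval s‖ := mul_one _
        _ ≤ Cb i * ‖QD.eval s‖ := hCb i s (le_of_lt hs)
    · -- agreement
      intro s hs hPi
      have hq_ne : ∀ i : Fin n, ((q i).map (algebraMap ℝ ℂ)).eval (-s) ≠ 0 :=
        fun i => Finset.prod_ne_zero_iff.mp hPi i (Finset.mem_univ i)
      have hDne : (∏ k : Fin m, (s + starRingEnd ℂ (w k))) ≠ 0 := by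
        refine Finset.prod_ne_zero_iff.mpr fun k _ => ?_
        intro h0
        have : (s + starRingEnd ℂ (w k)).re = 0 := by rw [h0]; simp
        rw [Complex.add_re, Complex.conj_re] at this
        linarith [hw k]
      have hNum : (∑ i : Fin n, (PP i).eval s *
          Complex.exp (((h i - hl : ℝ) : ℂ) * s)) =
          Complex.exp (-(hl : ℂ) * s) * delaySys p q h (-s) *
            (∏ i : Fin n, ((q i).map (algebraMap ℝ ℂ)).eval (-s)) := by
        rw [delaySys, Finset.mul_sum, Finset.sum_mul]
        refine Finset.sum_congr rfl fun i _ => ?_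
        have hexpeq : Complex.exp (-(hl : ℂ) * s) * Complex.exp (-(h i : ℂ) * (-s)) =
            Complex.exp (((h i - hl : ℝ) : ℂ) * s) := by
          rw [← Complex.exp_add]
          congr 1
          push_cast
          ring
        rw [hPPeval, ratTerm, ← Finset.mul_prod_erase _ _ (Finset.mem_univ i), ← hexpeq]
        have haq : (Polynomial.aeval (-s)) (q i) ≠ 0 := by
          rw [Polynomial.aeval_def, ← Polynomial.eval_map]
          exact hq_ne i
        field_simp [hq_ne i]
        simp [haq]
      beta_reduce
      rw [hNum, hQDeval, conjSys, Finset.prod_div_distrib]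
      rw [hfact s]
      field_simp
  · -- boundary modulus
    intro ω
    have hconj : -(Complex.I * (ω:ℂ)) = (starRingEnd ℂ) (Complex.I * (ω:ℂ)) := by
      simp [map_mul, Complex.conj_ofReal]
    have hdel : ∀ z : ℂ, delaySys p q h ((starRingEnd ℂ) z) =
        (starRingEnd ℂ) (delaySys p q h z) := by
      intro z
      rw [delaySys, delaySys, map_sum]
      refine Finset.sum_congr rfl fun i _ => ?_
      rw [ratTerm, ratTerm, map_mul, map_div₀, evalConj, evalConj]
      congr 1
      rw [← Complex.exp_conj]
      congr 1
      rw [map_mul, map_neg, Complex.conj_ofReal]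
    rw [conjSys, norm_mul, norm_mul, hconj, hdel, Complex.norm_conj]
    have h1 : ‖Complex.exp (-(hl : ℂ) * (Complex.I * (ω:ℂ)))‖ = 1 := by
      rw [Complex.norm_exp]
      have : (-(hl : ℂ) * (Complex.I * (ω:ℂ))).re = 0 := by
        simp [Complex.mul_re, Complex.mul_im]
      rw [this, Real.exp_zero]
    have h2 : ‖∏ k : Fin m,
        (Complex.I * (ω:ℂ) - w k) / (Complex.I * (ω:ℂ) + starRingEnd ℂ (w k))‖ = 1 := by
      rw [norm_prod]
      refine Finset.prod_eq_one fun k _ => ?_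
      have hden : (Complex.I * (ω:ℂ) + starRingEnd ℂ (w k)) ≠ 0 := by
        intro h0
        have : (Complex.I * (ω:ℂ) + starRingEnd ℂ (w k)).re = 0 := by rw [h0]; simp
        simp [Complex.add_re, Complex.mul_re, Complex.conj_re] at this
        linarith [hw k]
      have habs : ‖Complex.I * (ω:ℂ) - w k‖ =
          ‖Complex.I * (ω:ℂ) + starRingEnd ℂ (w k)‖ := by
        have hc2 : (starRingEnd ℂ) (Complex.I * (ω:ℂ) - w k) =
            -(Complex.I * (ω:ℂ) + starRingEnd ℂ (w k)) := by
          rw [map_sub, ← hconj]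
          ring
        rw [← Complex.norm_conj (Complex.I * (ω:ℂ) - w k), hc2, norm_neg]
      rw [norm_div, habs, div_self (norm_ne_zero_iff.mpr hden)]
    rw [h1, h2, one_mul, mul_one]
end

section
/- Let R(s) = Σ_{i=1}^n R_i(s) e^{-h_i s} with each R_i rational, stable and proper, relative degrees d_i, and suppose d_1 = max{d_2,…,d_n} (neutral type). Let ξ_i = lim_{ω→∞} R_i(jω)/R_1(jω). Then there exists σ_1 > 0 such that for all s = σ + jω with σ ≥ σ_1, |R(s)e^{h_1 s}/R_1(s)| ≥ 1 − Σ_{i=2}^n |ξ_i| e^{-(h_i − h_1)σ} · 2 > 0 for σ large enough; in particular, all zeros of R in the right half-plane satisfy Re(s) ≤ σ_1, i.e., the real parts of the unstable zeros of a neutral-type delay system are uniformly bounded. -/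
open Complex Polynomial Filter Finset


lemma multiset_norm_prod (T : Multiset ℂ) : ‖T.prod‖ = (T.map (fun z => ‖z‖)).prod := by
  induction T using Multiset.induction with
  | empty => simp
  | cons a T ih => simp [norm_mul, ih]

lemma multiset_pow_le_prod {T : Multiset ℝ} {a : ℝ} (ha : 0 ≤ a) (h : ∀ x ∈ T, a ≤ x) :
    a ^ Multiset.card T ≤ T.prod := by
  induction T using Multiset.induction with
  | empty => simp
  | cons b T ih =>
      simp only [Multiset.card_cons, Multiset.prod_cons, pow_succ]
      have hb : a ≤ b := h b (Multiset.mem_cons_self _ _)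
      have h2 := ih (fun x hx => h x (Multiset.mem_cons_of_mem hx))
      calc a ^ Multiset.card T * a ≤ T.prod * b := by
            apply mul_le_mul h2 hb ha
            exact le_trans (pow_nonneg ha _) h2
        _ = b * T.prod := mul_comm _ _

lemma poly_upper (A : Polynomial ℂ) : ∃ C > 0, ∀ s : ℂ, 1 ≤ ‖s‖ →
    ‖A.eval s‖ ≤ C * ‖s‖ ^ A.natDegree := by
  refine ⟨(∑ k ∈ Finset.range (A.natDegree + 1), ‖A.coeff k‖) + 1, by positivity,
    fun s hs => ?_⟩
  rw [Polynomial.eval_eq_sum_range]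
  calc ‖∑ k ∈ Finset.range (A.natDegree + 1), A.coeff k * s ^ k‖
      ≤ ∑ k ∈ Finset.range (A.natDegree + 1), ‖A.coeff k‖ * ‖s‖ ^ k := by
        refine le_trans (norm_sum_le _ _) (Finset.sum_le_sum fun k _ => ?_)
        rw [norm_mul, norm_pow]
    _ ≤ ∑ k ∈ Finset.range (A.natDegree + 1), ‖A.coeff k‖ * ‖s‖ ^ A.natDegree := by
        refine Finset.sum_le_sum fun k hk => ?_
        have hk' : k ≤ A.natDegree := Nat.lt_succ_iff.mp (Finset.mem_range.mp hk)
        exact mul_le_mul_of_nonneg_left (pow_le_pow_right₀ hs hk') (norm_nonneg _)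
    _ = (∑ k ∈ Finset.range (A.natDegree + 1), ‖A.coeff k‖) * ‖s‖ ^ A.natDegree := by
        rw [Finset.sum_mul]
    _ ≤ _ := by
        have : (0:ℝ) ≤ ‖s‖ ^ A.natDegree := by positivity
        nlinarith

lemma poly_lower (B : Polynomial ℂ) (hB : B ≠ 0) :
    ∃ c > 0, ∃ ρ : ℝ, 1 ≤ ρ ∧ ∀ s : ℂ, ρ ≤ ‖s‖ → c * ‖s‖ ^ B.natDegree ≤ ‖B.eval s‖ := by
  have hsplit : B.Splits := IsAlgClosed.splits B
  have hcard : Multiset.card B.roots = B.natDegree := splits_iff_card_roots.mp hsplit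
  have hsum_nonneg : 0 ≤ (B.roots.map (fun z => ‖z‖)).sum := by
    apply Multiset.sum_nonneg
    intro x hx
    obtain ⟨z, _, rfl⟩ := Multiset.mem_map.mp hx
    exact norm_nonneg _
  refine ⟨‖B.leadingCoeff‖ / 2 ^ B.natDegree, div_pos (norm_pos_iff.mpr (leadingCoeff_ne_zero.mpr hB)) (by positivity),
    2 * (B.roots.map (fun z => ‖z‖)).sum + 1, by linarith, fun s hs => ?_⟩
  have hs1 : (1:ℝ) ≤ ‖s‖ := by linarith
  have hroot : ∀ r ∈ B.roots, ‖s‖ / 2 ≤ ‖s - r‖ := by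
    intro r hr
    have h1 : ‖r‖ ≤ (B.roots.map (fun z => ‖z‖)).sum := by
      apply Multiset.single_le_sum _ _ (Multiset.mem_map_of_mem _ hr)
      intro x hx
      obtain ⟨z, _, rfl⟩ := Multiset.mem_map.mp hx
      exact norm_nonneg _
    have h2 : ‖s‖ - ‖r‖ ≤ ‖s - r‖ := norm_sub_norm_le s r
    linarith
  have heq := hsplit.eq_prod_roots
  have hval : ‖B.eval s‖ = ‖B.leadingCoeff‖ * ((B.roots.map (fun r => ‖s - r‖)).prod) := by
    conv_lhs => rw [heq]
    rw [Polynomial.eval_mul, Polynomial.eval_C, norm_mul, Polynomial.eval_multiset_prod]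
    rw [Multiset.map_map, multiset_norm_prod, Multiset.map_map]
    simp [Function.comp]
  rw [hval]
  have hprod : (‖s‖ / 2) ^ B.natDegree ≤ (B.roots.map (fun r => ‖s - r‖)).prod := by
    have hh := multiset_pow_le_prod (T := B.roots.map (fun r => ‖s - r‖)) (a := ‖s‖/2)
      (by positivity) ?_
    · simpa [hcard] using hh
    · intro x hx
      obtain ⟨r, hr, rfl⟩ := Multiset.mem_map.mp hx
      exact hroot r hr
  calc ‖B.leadingCoeff‖ / 2 ^ B.natDegree * ‖s‖ ^ B.natDegree
      = ‖B.leadingCoeff‖ * (‖s‖ / 2) ^ B.natDegree := by rw [div_pow]; ring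
    _ ≤ _ := mul_le_mul_of_nonneg_left hprod (norm_nonneg _)

/-- Ratio bound on large norms when numerator degree ≤ denominator degree. -/
lemma rat_bound (A B : Polynomial ℂ) (hB : B ≠ 0) (hdeg : A.natDegree ≤ B.natDegree) :
    ∃ C > 0, ∃ ρ : ℝ, 1 ≤ ρ ∧ ∀ s : ℂ, ρ ≤ ‖s‖ → ‖A.eval s‖ ≤ C * ‖B.eval s‖ := by
  obtain ⟨CA, hCA, hA⟩ := poly_upper A
  obtain ⟨cB, hcB, ρB, hρB1, hB'⟩ := poly_lower B hB
  refine ⟨CA / cB, by positivity, ρB, hρB1, fun s hs => ?_⟩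
  have hs1 : (1:ℝ) ≤ ‖s‖ := le_trans hρB1 hs
  have h1 : ‖A.eval s‖ ≤ CA * ‖s‖ ^ A.natDegree := hA s hs1
  have h2 : cB * ‖s‖ ^ B.natDegree ≤ ‖B.eval s‖ := hB' s hs
  have h3 : ‖s‖ ^ A.natDegree ≤ ‖s‖ ^ B.natDegree := pow_le_pow_right₀ hs1 hdeg
  calc ‖A.eval s‖ ≤ CA * ‖s‖ ^ B.natDegree := h1.trans (by nlinarith)
    _ = (CA / cB) * (cB * ‖s‖ ^ B.natDegree) := by field_simp
    _ ≤ (CA / cB) * ‖B.eval s‖ := by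
        apply mul_le_mul_of_nonneg_left h2; positivity

/-- If A/B tends to a finite limit along the imaginary axis, deg A ≤ deg B. -/
lemma deg_le_of_tendsto (A B : Polynomial ℂ) (hA : A ≠ 0) (hB : B ≠ 0) (ξ : ℂ)
    (ht : Tendsto (fun ω : ℝ => A.eval (Complex.I * ω) / B.eval (Complex.I * ω))
      atTop (nhds ξ)) : A.natDegree ≤ B.natDegree := by
  by_contra hlt
  push_neg at hlt
  obtain ⟨cA, hcA, ρA, hρA1, hA'⟩ := poly_lower A hA
  obtain ⟨cB, hcB, ρB, hρB1, hB'⟩ := poly_lower B hB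
  obtain ⟨CB, hCB, hBu⟩ := poly_upper B
  have hev1 : ∀ᶠ ω : ℝ in atTop, ‖A.eval (Complex.I * ω) / B.eval (Complex.I * ω)‖ < ‖ξ‖ + 1 :=
    ht.norm.eventually_lt_const (by linarith [norm_nonneg ξ])
  have hev2 : ∀ᶠ ω : ℝ in atTop,
      cA / CB * ω ≤ ‖A.eval (Complex.I * ω) / B.eval (Complex.I * ω)‖ := by
    filter_upwards [eventually_ge_atTop (max ρA ρB)] with ω hω
    have hωA : ρA ≤ ω := le_trans (le_max_left _ _) hω
    have hωB : ρB ≤ ω := le_trans (le_max_right _ _) hω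
    have hω1 : (1:ℝ) ≤ ω := le_trans hρA1 hωA
    have hnorm : ‖Complex.I * (ω:ℂ)‖ = ω := by
      rw [norm_mul, Complex.norm_I, one_mul, Complex.norm_real]
      exact abs_of_nonneg (by linarith)
    have hAl : cA * ω ^ A.natDegree ≤ ‖A.eval (Complex.I * ω)‖ := by
      have := hA' (Complex.I * ω) (by rw [hnorm]; exact hωA); rwa [hnorm] at this
    have hBl : cB * ω ^ B.natDegree ≤ ‖B.eval (Complex.I * ω)‖ := by
      have := hB' (Complex.I * ω) (by rw [hnorm]; exact hωB); rwa [hnorm] at this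
    have hBu' : ‖B.eval (Complex.I * ω)‖ ≤ CB * ω ^ B.natDegree := by
      have := hBu (Complex.I * ω) (by rw [hnorm]; exact hω1); rwa [hnorm] at this
    have hBpos : 0 < ‖B.eval (Complex.I * ω)‖ := lt_of_lt_of_le (by positivity) hBl
    rw [norm_div]
    have hpow : ω * ω ^ B.natDegree ≤ ω ^ A.natDegree := by
      calc ω * ω ^ B.natDegree = ω ^ (B.natDegree + 1) := by ring
        _ ≤ ω ^ A.natDegree := pow_le_pow_right₀ hω1 hlt
    have key : cA * (ω * ω ^ B.natDegree) ≤ ‖A.eval (Complex.I * ω)‖ := by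
      refine le_trans ?_ hAl
      exact mul_le_mul_of_nonneg_left hpow (le_of_lt hcA)
    calc cA / CB * ω = cA * (ω * ω ^ B.natDegree) / (CB * ω ^ B.natDegree) := by
          field_simp
      _ ≤ ‖A.eval (Complex.I * ω)‖ / ‖B.eval (Complex.I * ω)‖ :=
          div_le_div₀ (norm_nonneg _) key hBpos hBu'
  have hev3 : ∀ᶠ ω : ℝ in atTop, ‖ξ‖ + 1 < cA / CB * ω := by
    have : Tendsto (fun ω : ℝ => cA / CB * ω) atTop atTop :=
      Tendsto.const_mul_atTop (by positivity) tendsto_id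
    exact this.eventually_gt_atTop _
  obtain ⟨ω, h1, h2, h3⟩ := (hev1.and (hev2.and hev3)).exists
  linarith

/-- formalizable essence: the unstable zeros of a neutral-type delay system
have uniformly bounded real parts, i.e. they lie in a vertical strip `0 < Re s ≤ σ₁`. -/
theorem stmt13 (n : ℕ) (hn : 0 < n) (p q : Fin n → Polynomial ℝ) (h : Fin n → ℝ)
    (i0 : Fin n) (hi0 : i0 = ⟨0, hn⟩)
    (hpos : ∀ i, 0 ≤ h i) (hmono : StrictMono h)
    (hstable : ∀ i, ∀ z : ℂ, 0 ≤ z.re → ((q i).map (algebraMap ℝ ℂ)).eval z ≠ 0)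
    (hproper : ∀ i, (p i).natDegree ≤ (q i).natDegree)
    (hp1 : p i0 ≠ 0)
    (d : Fin n → ℕ) (hd : ∀ i, d i = (q i).natDegree - (p i).natDegree)
    (hneutral : d i0 = (Finset.univ.erase i0).sup d)
    (ξ : Fin n → ℂ)
    (hξ : ∀ i, Tendsto (fun ω : ℝ => ratTerm p q i (Complex.I * ω) /
        ratTerm p q i0 (Complex.I * ω)) atTop (nhds (ξ i))) :
    ∃ σ₁ > (0 : ℝ), ∀ s : ℂ, 0 < s.re → delaySys p q h s = 0 → s.re ≤ σ₁ := by
  set P : Fin n → Polynomial ℂ := fun i => (p i).map (algebraMap ℝ ℂ) with hP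
  set Q : Fin n → Polynomial ℂ := fun i => (q i).map (algebraMap ℝ ℂ) with hQ
  have hinj : Function.Injective (algebraMap ℝ ℂ) := (algebraMap ℝ ℂ).injective
  have hQne : ∀ i, Q i ≠ 0 := by
    intro i h0
    exact hstable i 1 (by norm_num) (by rw [show (q i).map (algebraMap ℝ ℂ) = Q i from rfl,
      h0, Polynomial.eval_zero])
  have hPne : P i0 ≠ 0 := by
    simpa [hP, Polynomial.map_ne_zero_iff hinj] using hp1
  -- order facts
  have hlt : ∀ i ∈ Finset.univ.erase i0, h i0 < h i := by
    intro i hi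
    have hne : i ≠ i0 := (Finset.mem_erase.mp hi).1
    apply hmono
    have h0 : i0.val = 0 := by rw [hi0]
    have h1 : i.val ≠ 0 := fun hc => hne (Fin.ext (by rw [hc, h0]))
    rw [Fin.lt_def]
    omega
  -- degree inequalities from the limits
  have hdeg : ∀ i, (P i * Q i0).natDegree ≤ (P i0 * Q i).natDegree := by
    intro i
    by_cases hpi : p i = 0
    · simp [hP, hpi]
    have hPine : P i ≠ 0 := by simpa [hP, Polynomial.map_ne_zero_iff hinj] using hpi
    obtain ⟨c0, hc0, ρ0, hρ01, hρ0⟩ := poly_lower (P i0) hPne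
    refine deg_le_of_tendsto _ _ (mul_ne_zero hPine (hQne i0))
      (mul_ne_zero hPne (hQne i)) (ξ i) ((hξ i).congr' ?_)
    filter_upwards [eventually_ge_atTop (max ρ0 0)] with ω hω
    have hω0 : 0 ≤ ω := le_trans (le_max_right _ _) hω
    have hnorm : ‖Complex.I * (ω:ℂ)‖ = ω := by
      rw [norm_mul, Complex.norm_I, one_mul, Complex.norm_real]
      exact abs_of_nonneg hω0
    have hre : (Complex.I * (ω:ℂ)).re = 0 := by simp
    have hPs : (P i0).eval (Complex.I * ω) ≠ 0 := by
      intro h0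
      have := hρ0 (Complex.I * ω) (by rw [hnorm]; exact le_trans (le_max_left _ _) hω)
      rw [h0, norm_zero, hnorm] at this
      have hω1 : (1:ℝ) ≤ ω := le_trans hρ01 (le_trans (le_max_left _ _) hω)
      nlinarith [pow_le_pow_right₀ hω1 (Nat.zero_le (P i0).natDegree),
        pow_pos (lt_of_lt_of_le one_pos hω1) (P i0).natDegree]
    have hQis : (Q i).eval (Complex.I * ω) ≠ 0 := hstable i _ (le_of_eq hre.symm)
    have hQi0s : (Q i0).eval (Complex.I * ω) ≠ 0 := hstable i0 _ (le_of_eq hre.symm)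
    show ratTerm p q i (Complex.I * ω) / ratTerm p q i0 (Complex.I * ω) =
      (P i * Q i0).eval (Complex.I * ω) / ((P i0 * Q i).eval (Complex.I * ω))
    rw [ratTerm, ratTerm, Polynomial.eval_mul, Polynomial.eval_mul]
    rw [show (p i).map (algebraMap ℝ ℂ) = P i from rfl,
        show (p i0).map (algebraMap ℝ ℂ) = P i0 from rfl,
        show (q i).map (algebraMap ℝ ℂ) = Q i from rfl,
        show (q i0).map (algebraMap ℝ ℂ) = Q i0 from rfl]
    field_simp
  -- uniform ratio bounds
  have hrb : ∀ i, ∃ C > 0, ∃ ρ : ℝ, 1 ≤ ρ ∧ ∀ s : ℂ, ρ ≤ ‖s‖ →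
      ‖(P i * Q i0).eval s‖ ≤ C * ‖(P i0 * Q i).eval s‖ :=
    fun i => rat_bound _ _ (mul_ne_zero hPne (hQne i)) (hdeg i)
  choose C hCpos ρ hρ1 hρ using hrb
  obtain ⟨c0, hc0, ρ0, hρ01, hρ0⟩ := poly_lower (P i0) hPne
  -- the decaying sum
  set S : ℝ → ℝ := fun σ => ∑ i ∈ Finset.univ.erase i0,
    C i * Real.exp (-(h i - h i0) * σ) with hS
  have hStend : Tendsto S atTop (nhds 0) := by
    rw [hS]
    have : Tendsto (fun σ : ℝ => ∑ i ∈ Finset.univ.erase i0,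
        C i * Real.exp (-(h i - h i0) * σ)) atTop
        (nhds (∑ i ∈ Finset.univ.erase i0, (0:ℝ))) := by
      apply tendsto_finset_sum
      intro i hi
      have ha : 0 < h i - h i0 := sub_pos.mpr (hlt i hi)
      have h1 : Tendsto (fun σ : ℝ => Real.exp (-((h i - h i0) * σ))) atTop (nhds 0) :=
        Real.tendsto_exp_neg_atTop_nhds_zero.comp
          (Tendsto.const_mul_atTop ha tendsto_id)
      have h2 : Tendsto (fun σ : ℝ => C i * Real.exp (-((h i - h i0) * σ))) atTop
          (nhds (C i * 0)) := h1.const_mul _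
      simp only [neg_mul]
      simpa using h2
    simpa using this
  obtain ⟨σ₂, hσ₂⟩ := (hStend.eventually_lt_const one_pos).exists_forall_of_atTop
  -- the bound
  set σ₁ : ℝ := 1 + |σ₂| + |ρ0| + ∑ i : Fin n, |ρ i| with hσ₁def
  have hsum_abs_nonneg : 0 ≤ ∑ i : Fin n, |ρ i| :=
    Finset.sum_nonneg fun i _ => abs_nonneg _
  have hσ₁pos : 0 < σ₁ := by
    rw [hσ₁def]; positivity
  refine ⟨σ₁, hσ₁pos, fun s hre hzero => ?_⟩
  by_contra hgt
  push_neg at hgt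
  have hsnorm : σ₁ < ‖s‖ := lt_of_lt_of_le hgt
    (le_trans (le_abs_self _) (Complex.abs_re_le_norm s))
  have hρis : ∀ i, ρ i ≤ ‖s‖ := by
    intro i
    have h1 : ρ i ≤ ∑ j : Fin n, |ρ j| :=
      le_trans (le_abs_self _) (Finset.single_le_sum (fun j _ => abs_nonneg (ρ j))
        (Finset.mem_univ i))
    have := abs_nonneg σ₂
    have := abs_nonneg ρ0
    rw [hσ₁def] at hsnorm
    linarith
  have hρ0s : ρ0 ≤ ‖s‖ := by
    have := abs_nonneg σ₂
    have := le_abs_self ρ0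
    rw [hσ₁def] at hsnorm
    linarith
  have hσ₂s : σ₂ ≤ s.re := by
    have := le_abs_self σ₂
    have := abs_nonneg ρ0
    rw [hσ₁def] at hgt
    linarith
  -- nonvanishing at s
  have hQs : ∀ i, (Q i).eval s ≠ 0 := fun i => hstable i s hre.le
  have hPs : (P i0).eval s ≠ 0 := by
    intro h0
    have := hρ0 s hρ0s
    rw [h0, norm_zero] at this
    have hn1 : (0:ℝ) < ‖s‖ := lt_of_le_of_lt hσ₁pos.le hsnorm
    nlinarith [pow_pos hn1 (P i0).natDegree]
  have hR0pos : 0 < ‖ratTerm p q i0 s‖ := by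
    rw [ratTerm, norm_div]
    exact div_pos (norm_pos_iff.mpr hPs) (norm_pos_iff.mpr (hQs i0))
  -- the zero equation
  have hsplit : ratTerm p q i0 s * Complex.exp (-(h i0 : ℂ) * s) =
      -∑ i ∈ Finset.univ.erase i0, ratTerm p q i s * Complex.exp (-(h i : ℂ) * s) := by
    have := Finset.sum_erase_add Finset.univ
      (fun i => ratTerm p q i s * Complex.exp (-(h i : ℂ) * s)) (Finset.mem_univ i0)
    rw [delaySys] at hzero
    rw [← this] at hzero
    linear_combination hzero
  have hexp_norm : ∀ a : ℝ, ‖Complex.exp (-(a:ℂ) * s)‖ = Real.exp (-a * s.re) := by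
    intro a
    rw [Complex.norm_exp]
    congr 1
    simp
  set K : ℝ := ‖ratTerm p q i0 s‖ * Real.exp (-(h i0) * s.re) with hK
  have hKpos : 0 < K := mul_pos hR0pos (Real.exp_pos _)
  have step1 : K ≤ ∑ i ∈ Finset.univ.erase i0,
      ‖ratTerm p q i s‖ * Real.exp (-(h i) * s.re) := by
    have e1 : K = ‖ratTerm p q i0 s * Complex.exp (-(h i0 : ℂ) * s)‖ := by
      rw [norm_mul, hexp_norm]
    rw [e1, hsplit, norm_neg]
    refine le_trans (norm_sum_le _ _) (le_of_eq (Finset.sum_congr rfl fun i _ => ?_))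
    rw [norm_mul, hexp_norm]
  have step2 : ∀ i ∈ Finset.univ.erase i0,
      ‖ratTerm p q i s‖ ≤ C i * ‖ratTerm p q i0 s‖ := by
    intro i _
    have hb := hρ i s (hρis i)
    rw [Polynomial.eval_mul, Polynomial.eval_mul, norm_mul, norm_mul] at hb
    have hQipos : 0 < ‖(Q i).eval s‖ := norm_pos_iff.mpr (hQs i)
    have hQi0pos : 0 < ‖(Q i0).eval s‖ := norm_pos_iff.mpr (hQs i0)
    rw [ratTerm, ratTerm, norm_div, norm_div]
    rw [div_le_iff₀ hQipos]
    have expand : C i * (‖(P i0).eval s‖ / ‖(Q i0).eval s‖) * ‖(Q i).eval s‖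
        = C i * (‖(P i0).eval s‖ * ‖(Q i).eval s‖) / ‖(Q i0).eval s‖ := by ring
    show ‖(P i).eval s‖ ≤ C i * (‖(P i0).eval s‖ / ‖(Q i0).eval s‖) * ‖(Q i).eval s‖
    rw [expand, le_div_iff₀ hQi0pos]
    calc ‖(P i).eval s‖ * ‖(Q i0).eval s‖ ≤ C i * (‖(P i0).eval s‖ * ‖(Q i).eval s‖) := hb
      _ = C i * (‖(P i0).eval s‖ * ‖(Q i).eval s‖) := rfl
  have step3 : K ≤ K * S s.re := by
    refine le_trans step1 ?_
    rw [hS, hK, Finset.mul_sum]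
    refine Finset.sum_le_sum fun i hi => ?_
    have hexp : Real.exp (-(h i) * s.re) =
        Real.exp (-(h i - h i0) * s.re) * Real.exp (-(h i0) * s.re) := by
      rw [← Real.exp_add]; ring_nf
    rw [hexp]
    have h2 := step2 i hi
    have hexps : 0 < Real.exp (-(h i - h i0) * s.re) := Real.exp_pos _
    have hexps2 : 0 < Real.exp (-(h i0) * s.re) := Real.exp_pos _
    calc ‖ratTerm p q i s‖ * (Real.exp (-(h i - h i0) * s.re) * Real.exp (-(h i0) * s.re))
        ≤ (C i * ‖ratTerm p q i0 s‖) *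
          (Real.exp (-(h i - h i0) * s.re) * Real.exp (-(h i0) * s.re)) := by
          apply mul_le_mul_of_nonneg_right h2; positivity
      _ = ‖ratTerm p q i0 s‖ * Real.exp (-(h i0) * s.re) *
          (C i * Real.exp (-(h i - h i0) * s.re)) := by ring
  have hSge1 : 1 ≤ S s.re := by
    have := step3
    nlinarith
  have hSlt1 : S s.re < 1 := hσ₂ s.re hσ₂s
  linarith
end
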